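/- Let Γ : G → R be a partial projective representation of a group G in a unital κ-algebra R with function σ : G × G → κ satisfying the defining axioms. Then for all g, h ∈ G, if σ(g,h) = 0 then Γ(g)Γ(h) = 0. -/
import Mathlib

/-- If `Γ : G → R` is a partial projective representation of a group `G`
in a unital `κ`-algebra `R` with function `σ : G × G → κ` satisfying the defining axioms
(1)–(4), then `σ(g,h) = 0` implies `Γ(g)Γ(h) = 0`. -/
theorem partialProjRep_sigma_zero_imp_mul_zero
    {κ G R : Type*} [Field κ] [Group G] [Ring R] [Algebra κ R]
    (Γ : G → R) (σ : G → G → κ)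
    (h1 : ∀ g h : G, σ g h = 0 → Γ g⁻¹ * Γ (g * h) = 0 ∧ Γ (g * h) * Γ h⁻¹ = 0)
    (h2 : ∀ g h : G, Γ g⁻¹ * Γ g * Γ h = σ g h • (Γ g⁻¹ * Γ (g * h)))
    (h3 : ∀ g h : G, Γ g * Γ h * Γ h⁻¹ = σ g h • (Γ (g * h) * Γ h⁻¹))
    (h4 : Γ 1 = 1) :
    ∀ g h : G, σ g h = 0 → Γ g * Γ h = 0 := by
  intro g h hσ
  by_cases hc : σ h h⁻¹ = 0
  · have hz := (h1 h h⁻¹ hc).2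
    have hΓh : Γ h = 0 := by simpa [h4] using hz
    simp [hΓh]
  · have key : Γ h * Γ h⁻¹ * Γ h = σ h h⁻¹ • Γ h := by
      have := h3 h h⁻¹
      simpa [h4] using this
    have zero1 : Γ g * Γ h * Γ h⁻¹ = 0 := by
      rw [h3 g h, hσ, zero_smul]
    have hkey2 : σ h h⁻¹ • (Γ g * Γ h) = 0 := by
      calc σ h h⁻¹ • (Γ g * Γ h) = Γ g * (σ h h⁻¹ • Γ h) := by
            rw [mul_smul_comm]
        _ = Γ g * (Γ h * Γ h⁻¹ * Γ h) := by rw [key]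
        _ = (Γ g * Γ h * Γ h⁻¹) * Γ h := by simp [mul_assoc]
        _ = 0 := by rw [zero1, zero_mul]
    have := congrArg (fun x => (σ h h⁻¹)⁻¹ • x) hkey2
    simpa [inv_smul_smul₀ hc] using this
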